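/- Let Ω ⊂ ℝ^m be a bounded open set, 0 < s < 1, 1 ≤ p < ∞, and u ∈ W^{s,p}(Ω; ℝ^ν). For every ε > 0 there exists δ > 0 such that for every Lipschitz map κ : ℝ^ν → ℝ^ν and every v ∈ W^{s,p}(Ω; ℝ^ν) with ‖u − v‖_{W^{s,p}(Ω)} ≤ δ, one has [κ∘u − κ∘v]_{W^{s,p}(Ω)} ≤ |κ|_{Lip} · ε. -/

import Mathlib

open MeasureTheory Metric Set Filter Function
open scoped ENNReal NNReal Manifold

noncomputable section

/-- `m`-dimensional Euclidean space. -/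
abbrev Euc (m : ℕ) := EuclideanSpace ℝ (Fin m)

/-- The `p`-th power of the Gagliardo seminorm of `u` on `Ω`. -/
def gagP (m ν : ℕ) (s p : ℝ) (Ω : Set (Euc m)) (u : Euc m → Euc ν) : ℝ≥0∞ :=
  ∫⁻ x in Ω, ∫⁻ y in Ω,
    ENNReal.ofReal (‖u x - u y‖ ^ p / ‖x - y‖ ^ ((m : ℝ) + s * p))

/-- The unit cube `[0,1)^m`. -/
def unitCube (m : ℕ) : Set (Euc m) := {x | ∀ i, x i ∈ Set.Ico (0:ℝ) 1}
/-- The full `W^{s,p}` norm (as an extended real). -/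
def wnorm (m ν : ℕ) (s p : ℝ) (Ω : Set (Euc m)) (w : Euc m → Euc ν) : ℝ≥0∞ :=
  (∫⁻ x in Ω, ENNReal.ofReal (‖w x‖ ^ p)) ^ (1/p) + gagP m ν s p Ω w ^ (1/p)


private lemma rpow_add_le_aux {p : ℝ} (hp : 1 ≤ p) {a b : ℝ} (ha : 0 ≤ a) (hb : 0 ≤ b) :
    (a + b) ^ p ≤ 2 ^ p * (a ^ p + b ^ p) := by
  have hp0 : (0:ℝ) ≤ p := zero_le_one.trans hp
  have h1 : a + b ≤ 2 * max a b := by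
    rcases le_total a b with h | h
    · rw [max_eq_right h]; linarith
    · rw [max_eq_left h]; linarith
  have h2 : (max a b) ^ p ≤ a ^ p + b ^ p := by
    rcases le_total a b with h | h
    · rw [max_eq_right h]
      exact le_add_of_nonneg_left (Real.rpow_nonneg ha p)
    · rw [max_eq_left h]
      exact le_add_of_nonneg_right (Real.rpow_nonneg hb p)
  calc (a + b) ^ p ≤ (2 * max a b) ^ p :=
        Real.rpow_le_rpow (by positivity) h1 hp0
    _ = 2 ^ p * (max a b) ^ p := Real.mul_rpow (by norm_num) (le_max_of_le_left ha)
    _ ≤ 2 ^ p * (a ^ p + b ^ p) :=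
        mul_le_mul_of_nonneg_left h2 (Real.rpow_nonneg (by norm_num) p)

private lemma div_le_div_nonneg_right' {a b c : ℝ} (h : a ≤ b) (hc : 0 ≤ c) :
    a / c ≤ b / c := by
  rw [div_eq_mul_inv, div_eq_mul_inv]
  exact mul_le_mul_of_nonneg_right h (inv_nonneg.2 hc)

private lemma gag_congr {m ν : ℕ} {s p : ℝ} {Ω : Set (Euc m)} {f g : Euc m → Euc ν}
    (h : f =ᵐ[volume.restrict Ω] g) :
    gagP m ν s p Ω f = gagP m ν s p Ω g := by
  unfold gagP
  refine lintegral_congr_ae ?_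
  filter_upwards [h] with x hx
  refine lintegral_congr_ae ?_
  filter_upwards [h] with y hy
  rw [hx, hy]

set_option maxHeartbeats 2000000 in
theorem continuity_of_composition (m ν : ℕ) (s p : ℝ)
    (hs0 : 0 < s) (hs1 : s < 1) (hp : 1 ≤ p)
    (Ω : Set (Euc m)) (hΩ : IsOpen Ω) (hΩb : Bornology.IsBounded Ω)
    (u : Euc m → Euc ν) (humeas : AEMeasurable u (volume.restrict Ω))
    (huLp : MemLp u (ENNReal.ofReal p) (volume.restrict Ω))
    (hugag : gagP m ν s p Ω u < ⊤) :
    ∀ ε > (0:ℝ), ∃ δ > (0:ℝ),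
      ∀ (L : ℝ≥0) (κ : Euc ν → Euc ν), LipschitzWith L κ →
      ∀ v : Euc m → Euc ν, AEMeasurable v (volume.restrict Ω) →
        MemLp v (ENNReal.ofReal p) (volume.restrict Ω) →
        gagP m ν s p Ω v < ⊤ →
        wnorm m ν s p Ω (fun x => u x - v x) ≤ ENNReal.ofReal δ →
        gagP m ν s p Ω (fun x => κ (u x) - κ (v x)) ^ (1/p)
          ≤ (L : ℝ≥0∞) * ENNReal.ofReal ε := by
  classical
  intro ε hε
  have hp0 : (0:ℝ) < p := lt_of_lt_of_le one_pos hp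
  have hp0' : (0:ℝ) ≤ p := hp0.le
  have hpne : p ≠ 0 := hp0.ne'
  have he0 : (0:ℝ) < (m:ℝ) + s * p :=
    add_pos_of_nonneg_of_pos (Nat.cast_nonneg m) (mul_pos hs0 hp0)
  set μ2 : Measure (Euc m × Euc m) :=
    (volume.restrict Ω).prod (volume.restrict Ω) with hμ2
  -- measurable representative of u
  set u' : Euc m → Euc ν := humeas.mk u with hu'
  have hu'm : Measurable u' := humeas.measurable_mk
  have huu' : u =ᵐ[volume.restrict Ω] u' := humeas.ae_eq_mk
  have hrpm : Measurable fun t : ℝ => t ^ ((m:ℝ) + s * p) :=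
    (Real.continuous_rpow_const he0.le).measurable
  have hrppm : Measurable fun t : ℝ => t ^ p :=
    (Real.continuous_rpow_const hp0').measurable
  set Fu : Euc m × Euc m → ℝ≥0∞ :=
    fun z => ENNReal.ofReal (‖u' z.1 - u' z.2‖ ^ p / ‖z.1 - z.2‖ ^ ((m:ℝ) + s * p)) with hFud
  have hFum : Measurable Fu := by
    apply ENNReal.measurable_ofReal.comp
    exact (hrppm.comp ((hu'm.comp measurable_fst).sub (hu'm.comp measurable_snd)).norm).div
      (hrpm.comp (measurable_fst.sub measurable_snd).norm)
  have hgagu' : gagP m ν s p Ω u' = gagP m ν s p Ω u := (gag_congr huu').symm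
  have hFuint : ∫⁻ z, Fu z ∂μ2 ≠ ⊤ := by
    rw [hμ2, lintegral_prod _ hFum.aemeasurable]
    exact (lt_of_eq_of_lt hgagu' hugag).ne
  -- constants
  set E : ℝ≥0∞ := ENNReal.ofReal ε ^ p with hE
  have hE0 : 0 < E := ENNReal.rpow_pos (ENNReal.ofReal_pos.2 hε) ENNReal.ofReal_ne_top
  have hEtop : E ≠ ⊤ := ENNReal.rpow_ne_top_of_nonneg hp0' ENNReal.ofReal_ne_top
  set C : ℝ≥0∞ := ENNReal.ofReal (2 ^ p) with hC
  have hCtop : C ≠ ⊤ := ENNReal.ofReal_ne_top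
  have hCC : C + C * C ≠ ⊤ := by
    exact ENNReal.add_ne_top.2 ⟨hCtop, ENNReal.mul_ne_top hCtop hCtop⟩
  -- small sets
  set T : ℕ → Set (Euc m × Euc m) :=
    fun n => {z | z.1 ≠ z.2 ∧ ‖z.1 - z.2‖ < 1 / ((n:ℝ) + 1)} with hT
  have hTm : ∀ n, MeasurableSet (T n) := by
    intro n
    have : IsOpen (T n) := by
      apply IsOpen.inter
      · exact isOpen_ne_fun continuous_fst continuous_snd
      · exact isOpen_lt (continuous_fst.sub continuous_snd).norm continuous_const
    exact this.measurableSet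
  have hA : Tendsto (fun n => ∫⁻ z, (T n).indicator Fu z ∂μ2) atTop (nhds 0) := by
    have h0 : (0:ℝ≥0∞) = ∫⁻ _ : Euc m × Euc m, (0:ℝ≥0∞) ∂μ2 := by simp
    rw [h0]
    apply tendsto_lintegral_of_dominated_convergence Fu
      (fun n => hFum.indicator (hTm n))
      (fun n => Filter.Eventually.of_forall fun z => Set.indicator_le_self _ _ z)
      hFuint
    apply Filter.Eventually.of_forall
    intro z
    by_cases hz : z.1 = z.2
    · refine Tendsto.congr (fun n => ?_) tendsto_const_nhds
      rw [Set.indicator_of_notMem]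
      intro hmem
      exact hmem.1 hz
    · have hr : 0 < ‖z.1 - z.2‖ := by
        rw [norm_pos_iff]; exact sub_ne_zero_of_ne hz
      obtain ⟨N, hN⟩ := exists_nat_gt (1 / ‖z.1 - z.2‖)
      refine Tendsto.congr' ?_ tendsto_const_nhds
      filter_upwards [eventually_ge_atTop N] with n hn
      have hNn : (N:ℝ) ≤ n := Nat.cast_le.2 hn
      have h1 : 1 / ‖z.1 - z.2‖ < (n:ℝ) + 1 := by linarith
      have h2 : 1 / ((n:ℝ) + 1) ≤ ‖z.1 - z.2‖ := by
        rw [div_lt_iff₀ hr] at h1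
        rw [div_le_iff₀ (by positivity)]
        nlinarith
      rw [Set.indicator_of_notMem]
      intro hmem
      exact absurd hmem.2 (not_lt.2 h2)
  have hτ0 : (0:ℝ≥0∞) < E / 3 / (C + C * C) := by
    apply ENNReal.div_pos _ hCC
    exact (ENNReal.div_pos hE0.ne' (by norm_num)).ne'
  obtain ⟨n, hn⟩ := (hA.eventually_lt_const hτ0).exists
  set ρ : ℝ := 1 / ((n:ℝ) + 1) with hρ
  have hρ0 : 0 < ρ := by rw [hρ]; positivity
  set c : ℝ := ρ ^ ((m:ℝ) + s * p) with hc
  have hc0 : 0 < c := Real.rpow_pos_of_pos hρ0 _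
  set c' : ℝ≥0∞ := ENNReal.ofReal c with hc'
  have hc'0 : c' ≠ 0 := (ENNReal.ofReal_pos.2 hc0).ne'
  have hKtop : C / c' ≠ ⊤ := (ENNReal.div_lt_top hCtop hc'0).ne
  set V : ℝ≥0∞ := volume Ω with hV
  have hVtop : V ≠ ⊤ := hΩb.measure_lt_top.ne
  set M : ℝ≥0∞ := (E / 3 / (C * C)) ⊓ (E / 3 / (C / c' * (V + V))) with hM
  have hM0 : 0 < M := by
    apply lt_min
    · exact ENNReal.div_pos (ENNReal.div_pos hE0.ne' (by norm_num)).ne'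
        (ENNReal.mul_ne_top hCtop hCtop)
    · exact ENNReal.div_pos (ENNReal.div_pos hE0.ne' (by norm_num)).ne'
        (ENNReal.mul_ne_top hKtop (ENNReal.add_ne_top.2 ⟨hVtop, hVtop⟩))
  set N' : ℝ≥0∞ := 1 ⊓ M with hN'
  have hN'0 : 0 < N' := lt_min one_pos hM0
  have hN'top : N' ≠ ⊤ := ne_top_of_le_ne_top ENNReal.one_ne_top (min_le_left _ _)
  refine ⟨N'.toReal, ENNReal.toReal_pos hN'0.ne' hN'top, ?_⟩
  have hδN : ENNReal.ofReal N'.toReal = N' := ENNReal.ofReal_toReal hN'top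
  intro L κ hκ v hvmeas hvLp hvgag hnear
  set v' : Euc m → Euc ν := hvmeas.mk v with hv'
  have hv'm : Measurable v' := hvmeas.measurable_mk
  have hvv' : v =ᵐ[volume.restrict Ω] v' := hvmeas.ae_eq_mk
  set w : Euc m → Euc ν := fun x => u' x - v' x with hw
  have hwm : Measurable w := hu'm.sub hv'm
  have hworig : (fun x => u x - v x) =ᵐ[volume.restrict Ω] w := by
    filter_upwards [huu', hvv'] with x h1 h2
    rw [hw]; simp only []; rw [← h1, ← h2]
  set R : Euc m → ℝ≥0∞ := fun x => ENNReal.ofReal (‖w x‖ ^ p) with hR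
  have hRm : Measurable R :=
    ENNReal.measurable_ofReal.comp (hrppm.comp hwm.norm)
  set Fv : Euc m × Euc m → ℝ≥0∞ :=
    fun z => ENNReal.ofReal (‖v' z.1 - v' z.2‖ ^ p / ‖z.1 - z.2‖ ^ ((m:ℝ) + s * p)) with hFvd
  have hFvm : Measurable Fv := by
    apply ENNReal.measurable_ofReal.comp
    exact (hrppm.comp ((hv'm.comp measurable_fst).sub (hv'm.comp measurable_snd)).norm).div
      (hrpm.comp (measurable_fst.sub measurable_snd).norm)
  set Fw : Euc m × Euc m → ℝ≥0∞ :=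
    fun z => ENNReal.ofReal (‖w z.1 - w z.2‖ ^ p / ‖z.1 - z.2‖ ^ ((m:ℝ) + s * p)) with hFwd
  have hFwm : Measurable Fw := by
    apply ENNReal.measurable_ofReal.comp
    exact (hrppm.comp ((hwm.comp measurable_fst).sub (hwm.comp measurable_snd)).norm).div
      (hrpm.comp (measurable_fst.sub measurable_snd).norm)
  -- consequences of `hnear`
  set Iw : ℝ≥0∞ := ∫⁻ x in Ω, R x with hIw
  have hpow : ∀ a : ℝ≥0∞, a ^ (1/p) ≤ ENNReal.ofReal N'.toReal → a ≤ M := by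
    intro a ha
    have h1 : (a ^ (1/p)) ^ p ≤ (ENNReal.ofReal N'.toReal) ^ p :=
      ENNReal.rpow_le_rpow ha hp0'
    rw [← ENNReal.rpow_mul, one_div_mul_cancel hpne, ENNReal.rpow_one, hδN] at h1
    have h2 : N' ^ p ≤ N' ^ (1:ℝ) :=
      ENNReal.rpow_le_rpow_of_exponent_ge (min_le_left _ _) hp
    rw [ENNReal.rpow_one] at h2
    exact le_trans h1 (le_trans h2 (min_le_right _ _))
  have hIwM : Iw ≤ M := by
    apply hpow
    have heq : Iw = ∫⁻ x in Ω, ENNReal.ofReal (‖u x - v x‖ ^ p) := by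
      rw [hIw]
      refine lintegral_congr_ae ?_
      filter_upwards [hworig] with x hx
      rw [hR]; simp only []; rw [← hx]
    rw [heq]
    refine le_trans ?_ hnear
    rw [wnorm]
    exact le_self_add
  have hgwM : gagP m ν s p Ω w ≤ M := by
    apply hpow
    rw [← gag_congr hworig]
    refine le_trans ?_ hnear
    rw [wnorm]
    exact le_add_self
  -- the small-distance set
  set S : Set (Euc m × Euc m) := {z | ‖z.1 - z.2‖ < ρ} with hS
  have hSm : MeasurableSet S :=
    (isOpen_lt (continuous_fst.sub continuous_snd).norm continuous_const).measurableSet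
  set G : Euc m × Euc m → ℝ≥0∞ := fun z => C * (Fu z + Fv z) with hG
  have hGm : Measurable (S.indicator G) :=
    ((hFum.add hFvm).const_mul C).indicator hSm
  have hLp0 : (0:ℝ) ≤ (L:ℝ) ^ p := Real.rpow_nonneg L.coe_nonneg p
  -- the master pointwise bound
  have master : ∀ x y : Euc m,
      ENNReal.ofReal
          (‖(κ (u' x) - κ (v' x)) - (κ (u' y) - κ (v' y))‖ ^ p / ‖x - y‖ ^ ((m:ℝ) + s * p))
        ≤ ENNReal.ofReal ((L:ℝ) ^ p) * (S.indicator G (x, y) + C * (R x + R y) / c') := by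
    intro x y
    by_cases hxy : ‖x - y‖ < ρ
    · have hmem : (x, y) ∈ S := hxy
      rw [Set.indicator_of_mem hmem]
      have hre : ‖(κ (u' x) - κ (v' x)) - (κ (u' y) - κ (v' y))‖ ^ p / ‖x - y‖ ^ ((m:ℝ) + s * p)
          ≤ (L:ℝ) ^ p * (2 ^ p * (‖u' x - u' y‖ ^ p / ‖x - y‖ ^ ((m:ℝ) + s * p)
              + ‖v' x - v' y‖ ^ p / ‖x - y‖ ^ ((m:ℝ) + s * p))) := by
        have hD : ‖(κ (u' x) - κ (v' x)) - (κ (u' y) - κ (v' y))‖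
            ≤ (L:ℝ) * (‖u' x - u' y‖ + ‖v' x - v' y‖) := by
          have e1 : (κ (u' x) - κ (v' x)) - (κ (u' y) - κ (v' y))
              = (κ (u' x) - κ (u' y)) - (κ (v' x) - κ (v' y)) := by abel
          rw [e1]
          refine (norm_sub_le _ _).trans ?_
          have b1 : ‖κ (u' x) - κ (u' y)‖ ≤ (L:ℝ) * ‖u' x - u' y‖ := by
            simpa [dist_eq_norm] using hκ.dist_le_mul (u' x) (u' y)
          have b2 : ‖κ (v' x) - κ (v' y)‖ ≤ (L:ℝ) * ‖v' x - v' y‖ := by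
            simpa [dist_eq_norm] using hκ.dist_le_mul (v' x) (v' y)
          rw [mul_add]; linarith
        calc ‖(κ (u' x) - κ (v' x)) - (κ (u' y) - κ (v' y))‖ ^ p / ‖x - y‖ ^ ((m:ℝ) + s * p)
            ≤ ((L:ℝ) * (‖u' x - u' y‖ + ‖v' x - v' y‖)) ^ p / ‖x - y‖ ^ ((m:ℝ) + s * p) :=
              div_le_div_nonneg_right' (Real.rpow_le_rpow (norm_nonneg _) hD hp0')
                (Real.rpow_nonneg (norm_nonneg _) _)
          _ = ((L:ℝ) ^ p * (‖u' x - u' y‖ + ‖v' x - v' y‖) ^ p) / ‖x - y‖ ^ ((m:ℝ) + s * p) := by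
              rw [Real.mul_rpow L.coe_nonneg (by positivity)]
          _ ≤ ((L:ℝ) ^ p * (2 ^ p * (‖u' x - u' y‖ ^ p + ‖v' x - v' y‖ ^ p)))
                / ‖x - y‖ ^ ((m:ℝ) + s * p) :=
              div_le_div_nonneg_right'
                (mul_le_mul_of_nonneg_left
                  (rpow_add_le_aux hp (norm_nonneg _) (norm_nonneg _)) hLp0)
                (Real.rpow_nonneg (norm_nonneg _) _)
          _ = (L:ℝ) ^ p * (2 ^ p * (‖u' x - u' y‖ ^ p / ‖x - y‖ ^ ((m:ℝ) + s * p)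
                + ‖v' x - v' y‖ ^ p / ‖x - y‖ ^ ((m:ℝ) + s * p))) := by ring
      refine le_trans (ENNReal.ofReal_le_ofReal hre) ?_
      rw [ENNReal.ofReal_mul hLp0, ENNReal.ofReal_mul (by positivity),
        ENNReal.ofReal_add (by positivity) (by positivity)]
      exact mul_le_mul_right le_self_add _
    · have hmem : (x, y) ∉ S := hxy
      rw [Set.indicator_of_notMem hmem, zero_add]
      have hd : c ≤ ‖x - y‖ ^ ((m:ℝ) + s * p) := by
        rw [hc]
        exact Real.rpow_le_rpow hρ0.le (not_lt.1 hxy) he0.le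
      have hre : ‖(κ (u' x) - κ (v' x)) - (κ (u' y) - κ (v' y))‖ ^ p / ‖x - y‖ ^ ((m:ℝ) + s * p)
          ≤ (L:ℝ) ^ p * (2 ^ p * (‖w x‖ ^ p + ‖w y‖ ^ p) / c) := by
        have hD : ‖(κ (u' x) - κ (v' x)) - (κ (u' y) - κ (v' y))‖
            ≤ (L:ℝ) * (‖w x‖ + ‖w y‖) := by
          refine (norm_sub_le _ _).trans ?_
          have b1 : ‖κ (u' x) - κ (v' x)‖ ≤ (L:ℝ) * ‖w x‖ := by
            simpa [dist_eq_norm] using hκ.dist_le_mul (u' x) (v' x)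
          have b2 : ‖κ (u' y) - κ (v' y)‖ ≤ (L:ℝ) * ‖w y‖ := by
            simpa [dist_eq_norm] using hκ.dist_le_mul (u' y) (v' y)
          rw [mul_add]; linarith
        calc ‖(κ (u' x) - κ (v' x)) - (κ (u' y) - κ (v' y))‖ ^ p / ‖x - y‖ ^ ((m:ℝ) + s * p)
            ≤ ((L:ℝ) * (‖w x‖ + ‖w y‖)) ^ p / ‖x - y‖ ^ ((m:ℝ) + s * p) :=
              div_le_div_nonneg_right' (Real.rpow_le_rpow (norm_nonneg _) hD hp0')
                (Real.rpow_nonneg (norm_nonneg _) _)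
          _ ≤ ((L:ℝ) ^ p * (2 ^ p * (‖w x‖ ^ p + ‖w y‖ ^ p))) / ‖x - y‖ ^ ((m:ℝ) + s * p) := by
              apply div_le_div_nonneg_right' _ (Real.rpow_nonneg (norm_nonneg _) _)
              rw [Real.mul_rpow L.coe_nonneg (by positivity)]
              exact mul_le_mul_of_nonneg_left
                (rpow_add_le_aux hp (norm_nonneg _) (norm_nonneg _)) hLp0
          _ ≤ ((L:ℝ) ^ p * (2 ^ p * (‖w x‖ ^ p + ‖w y‖ ^ p))) / c := by
              apply div_le_div_of_nonneg_left (by positivity) hc0 hd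
          _ = (L:ℝ) ^ p * (2 ^ p * (‖w x‖ ^ p + ‖w y‖ ^ p) / c) := by ring
      refine le_trans (ENNReal.ofReal_le_ofReal hre) (le_of_eq ?_)
      rw [ENNReal.ofReal_mul hLp0, ENNReal.ofReal_div_of_pos hc0,
        ENNReal.ofReal_mul (by positivity),
        ENNReal.ofReal_add (by positivity) (by positivity)]
  -- integration of the master bound
  have hinner : ∀ x : Euc m,
      (∫⁻ y in Ω, ENNReal.ofReal ((L:ℝ) ^ p) * (S.indicator G (x, y) + C * (R x + R y) / c'))
        = ENNReal.ofReal ((L:ℝ) ^ p) *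
            ((∫⁻ y in Ω, S.indicator G (x, y)) + ∫⁻ y in Ω, C * (R x + R y) / c') := by
    intro x
    rw [lintegral_const_mul' _ _ ENNReal.ofReal_ne_top,
      lintegral_add_left (f := fun y => S.indicator G (x, y))
        (hGm.comp measurable_prodMk_left)]
  have hI1m : Measurable fun x => ∫⁻ y in Ω, S.indicator G (x, y) :=
    hGm.lintegral_prod_right'
  have step1 : gagP m ν s p Ω (fun x => κ (u' x) - κ (v' x))
      ≤ ENNReal.ofReal ((L:ℝ) ^ p) *
          ((∫⁻ x in Ω, ∫⁻ y in Ω, S.indicator G (x, y))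
            + ∫⁻ x in Ω, ∫⁻ y in Ω, C * (R x + R y) / c') := by
    have h1 : gagP m ν s p Ω (fun x => κ (u' x) - κ (v' x))
        ≤ ∫⁻ x in Ω, ∫⁻ y in Ω,
            ENNReal.ofReal ((L:ℝ) ^ p) * (S.indicator G (x, y) + C * (R x + R y) / c') := by
      unfold gagP
      exact lintegral_mono fun x => lintegral_mono fun y => master x y
    refine h1.trans_eq ?_
    rw [lintegral_congr hinner, lintegral_const_mul' _ _ ENNReal.ofReal_ne_top,
      lintegral_add_left hI1m]
  -- the small-distance part
  have hsmall : (∫⁻ x in Ω, ∫⁻ y in Ω, S.indicator G (x, y))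
      ≤ (C + C * C) * (E / 3 / (C + C * C)) + (C * C) * M := by
    have heq : (∫⁻ x in Ω, ∫⁻ y in Ω, S.indicator G (x, y))
        = ∫⁻ z, S.indicator G z ∂μ2 := (lintegral_prod _ hGm.aemeasurable).symm
    rw [heq]
    have hpt : ∀ z : Euc m × Euc m,
        S.indicator G z ≤ (C + C * C) * (T n).indicator Fu z + (C * C) * Fw z := by
      intro z
      by_cases hz : z ∈ S
      · rw [Set.indicator_of_mem hz]
        by_cases hzd : z.1 = z.2
        · have hFu0 : Fu z = 0 := by
            rw [hFud]; simp [hzd, Real.zero_rpow hpne]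
          have hFv0 : Fv z = 0 := by
            rw [hFvd]; simp [hzd, Real.zero_rpow hpne]
          rw [hG]; simp [hFu0, hFv0]
        · have hzT : z ∈ T n := ⟨hzd, hρ ▸ hz⟩
          rw [Set.indicator_of_mem hzT]
          have hFvb : Fv z ≤ C * (Fu z + Fw z) := by
            have hv : ‖v' z.1 - v' z.2‖ ≤ ‖u' z.1 - u' z.2‖ + ‖w z.1 - w z.2‖ := by
              have e1 : v' z.1 - v' z.2 = (u' z.1 - u' z.2) - (w z.1 - w z.2) := by
                rw [hw]; beta_reduce; abel
              rw [e1]; exact norm_sub_le _ _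
            have hre : ‖v' z.1 - v' z.2‖ ^ p / ‖z.1 - z.2‖ ^ ((m:ℝ) + s * p)
                ≤ 2 ^ p * (‖u' z.1 - u' z.2‖ ^ p / ‖z.1 - z.2‖ ^ ((m:ℝ) + s * p)
                    + ‖w z.1 - w z.2‖ ^ p / ‖z.1 - z.2‖ ^ ((m:ℝ) + s * p)) := by
              calc ‖v' z.1 - v' z.2‖ ^ p / ‖z.1 - z.2‖ ^ ((m:ℝ) + s * p)
                  ≤ (‖u' z.1 - u' z.2‖ + ‖w z.1 - w z.2‖) ^ p
                      / ‖z.1 - z.2‖ ^ ((m:ℝ) + s * p) :=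
                    div_le_div_nonneg_right' (Real.rpow_le_rpow (norm_nonneg _) hv hp0')
                      (Real.rpow_nonneg (norm_nonneg _) _)
                _ ≤ (2 ^ p * (‖u' z.1 - u' z.2‖ ^ p + ‖w z.1 - w z.2‖ ^ p))
                      / ‖z.1 - z.2‖ ^ ((m:ℝ) + s * p) :=
                    div_le_div_nonneg_right'
                      (rpow_add_le_aux hp (norm_nonneg _) (norm_nonneg _))
                      (Real.rpow_nonneg (norm_nonneg _) _)
                _ = 2 ^ p * (‖u' z.1 - u' z.2‖ ^ p / ‖z.1 - z.2‖ ^ ((m:ℝ) + s * p)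
                      + ‖w z.1 - w z.2‖ ^ p / ‖z.1 - z.2‖ ^ ((m:ℝ) + s * p)) := by ring
            refine le_trans (ENNReal.ofReal_le_ofReal hre) (le_of_eq ?_)
            rw [ENNReal.ofReal_mul (by positivity),
              ENNReal.ofReal_add (by positivity) (by positivity)]
          calc C * (Fu z + Fv z)
              ≤ C * (Fu z + C * (Fu z + Fw z)) :=
                mul_le_mul_right (add_le_add_right hFvb _) C
            _ = (C + C * C) * Fu z + (C * C) * Fw z := by ring
      · rw [Set.indicator_of_notMem hz]
        exact zero_le
    calc (∫⁻ z, S.indicator G z ∂μ2)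
        ≤ ∫⁻ z, ((C + C * C) * (T n).indicator Fu z + (C * C) * Fw z) ∂μ2 :=
          lintegral_mono hpt
      _ = (C + C * C) * (∫⁻ z, (T n).indicator Fu z ∂μ2) + (C * C) * ∫⁻ z, Fw z ∂μ2 := by
          rw [lintegral_add_left ((hFum.indicator (hTm n)).const_mul _),
            lintegral_const_mul' _ _ hCC,
            lintegral_const_mul' _ _ (ENNReal.mul_ne_top hCtop hCtop)]
      _ ≤ (C + C * C) * (E / 3 / (C + C * C)) + (C * C) * M := by
          refine add_le_add (mul_le_mul_right hn.le _) (mul_le_mul_right ?_ _)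
          rw [hμ2, lintegral_prod _ hFwm.aemeasurable]
          exact hgwM
  -- the large-distance part
  have hrear : ∀ X : ℝ≥0∞, C * X / c' = C / c' * X := fun X => by
    rw [div_eq_mul_inv, div_eq_mul_inv, mul_right_comm]
  have hbig : (∫⁻ x in Ω, ∫⁻ y in Ω, C * (R x + R y) / c')
      = C / c' * (Iw * V + Iw * V) := by
    have hinner2 : ∀ x : Euc m,
        (∫⁻ y in Ω, C * (R x + R y) / c') = C / c' * (R x * V + Iw) := by
      intro x
      simp only [hrear]
      rw [lintegral_const_mul' _ _ hKtop, lintegral_add_left measurable_const,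
        setLIntegral_const, hIw, hV]
    rw [lintegral_congr hinner2, lintegral_const_mul' _ _ hKtop,
      lintegral_add_left (hRm.mul_const _), lintegral_mul_const' _ _ hVtop,
      setLIntegral_const, hIw, hV]
  -- combine everything
  have htotal : gagP m ν s p Ω (fun x => κ (u' x) - κ (v' x))
      ≤ ENNReal.ofReal ((L:ℝ) ^ p) * E := by
    refine step1.trans ?_
    have t1 : (C + C * C) * (E / 3 / (C + C * C)) ≤ E / 3 :=
      ENNReal.mul_le_of_le_div' le_rfl
    have t2 : (C * C) * M ≤ E / 3 :=
      ENNReal.mul_le_of_le_div' (min_le_left _ _)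
    have t3 : C / c' * (Iw * V + Iw * V) ≤ E / 3 := by
      have he : C / c' * (Iw * V + Iw * V) = Iw * (C / c' * (V + V)) := by ring
      rw [he]
      exact ENNReal.mul_le_of_le_div (le_trans hIwM (min_le_right _ _))
    have h2 : (∫⁻ x in Ω, ∫⁻ y in Ω, S.indicator G (x, y))
          + (∫⁻ x in Ω, ∫⁻ y in Ω, C * (R x + R y) / c') ≤ E := by
      calc (∫⁻ x in Ω, ∫⁻ y in Ω, S.indicator G (x, y))
            + (∫⁻ x in Ω, ∫⁻ y in Ω, C * (R x + R y) / c')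
          ≤ ((C + C * C) * (E / 3 / (C + C * C)) + (C * C) * M)
            + C / c' * (Iw * V + Iw * V) := add_le_add hsmall hbig.le
        _ ≤ (E / 3 + E / 3) + E / 3 := add_le_add (add_le_add t1 t2) t3
        _ = E := by
            rw [show E / 3 + E / 3 + E / 3 = E / 3 * 3 by ring,
              ENNReal.div_mul_cancel (by norm_num) (by norm_num)]
    exact mul_le_mul_right h2 _
  have hfinal : gagP m ν s p Ω (fun x => κ (u x) - κ (v x))
      ≤ ENNReal.ofReal ((L:ℝ) ^ p) * E := by
    have hcong : (fun x => κ (u x) - κ (v x)) =ᵐ[volume.restrict Ω]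
        (fun x => κ (u' x) - κ (v' x)) := by
      filter_upwards [huu', hvv'] with x h1 h2
      rw [h1, h2]
    rw [gag_congr hcong]
    exact htotal
  calc gagP m ν s p Ω (fun x => κ (u x) - κ (v x)) ^ (1/p)
      ≤ (ENNReal.ofReal ((L:ℝ) ^ p) * E) ^ (1/p) :=
        ENNReal.rpow_le_rpow hfinal (by positivity)
    _ = (L : ℝ≥0∞) * ENNReal.ofReal ε := by
        rw [hE, ENNReal.mul_rpow_of_nonneg _ _ (by positivity),
          ← ENNReal.ofReal_rpow_of_nonneg L.coe_nonneg hp0']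
        simp only [← ENNReal.rpow_mul, mul_one_div_cancel hpne, ENNReal.rpow_one]
        rw [ENNReal.ofReal_coe_nnreal]
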